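/- Consider the two-link network with discontinuous congestion costs c_ℓ(μ) = 1 if μ < 1/2 and 2 otherwise, and c_{ℓ'}(μ) = 1 if μ ≤ 1/2 and 2 otherwise, where μ is the proportion of the population on the link. Then no distribution (1−x, x) ∈ [0,1]² with x the proportion on ℓ is a Wardrop/mean-field equilibrium. -/
import Mathlib

/-- The travel time on link ℓ: `1` if the proportion on it is `< 1/2`, else `2`. -/
noncomputable def cLink (μ : ℝ) : ℝ := if μ < 1 / 2 then 1 else 2

/-- The travel time on link ℓ': `1` if the proportion on it is `≤ 1/2`, else `2`. -/
noncomputable def cLink' (μ : ℝ) : ℝ := if μ ≤ 1 / 2 then 1 else 2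

/-- With the discontinuous congestion costs `cLink` and `cLink'`, no distribution putting
proportion `x ∈ [0,1]` on link ℓ and `1 − x` on link ℓ' is a Wardrop / mean-field
equilibrium: there is no `x` such that every used link has minimal cost. -/
theorem no_equilibrium_discontinuous_costs :
    ¬ ∃ x : ℝ, x ∈ Set.Icc (0 : ℝ) 1 ∧
      (0 < x → cLink x ≤ cLink' (1 - x)) ∧
      (x < 1 → cLink' (1 - x) ≤ cLink x) := by
  rintro ⟨x, ⟨hx0, hx1⟩, h1, h2⟩
  unfold cLink cLink' at h1 h2
  rcases lt_or_ge x (1/2) with h | h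
  · have := h2 (by linarith)
    rw [if_pos h, if_neg (by linarith)] at this
    linarith
  · have := h1 (by linarith)
    rw [if_neg (by linarith), if_pos (by linarith)] at this
    linarith
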